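/- Let I be an independent set in the 'conflict graph' of hyperwalks (no two hyperwalks in I share a vertex), each of which is augmenting with respect to a profile P = ((𝒢₀, M₀), ..., (𝒢_α, M_α)). Then applying all hyperwalks of I to P, in any order, yields the same resulting profile P Δ I, and each resulting M'ᵢ is a matching. -/

import Mathlib

open Finset

/-- A finite edge set is a matching if every vertex lies on at most one of its edges. -/
def EdgesAreMatching {V : Type*} [DecidableEq V] (M : Finset (Sym2 V)) : Prop :=
  ∀ v : V, (M.filter (fun e => v ∈ e)).card ≤ 1

/-- The set of vertices of a hyperwalk `W = ((e₁,s₁),...,(e_k,s_k))`. -/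
def HWContains {V : Type*} (W : List (Sym2 V × ℕ)) (v : V) : Prop :=
  ∃ p ∈ W, v ∈ p.1

/-- The underlying edges of a hyperwalk form a walk: consecutive edges share a vertex. -/
def HWIsWalk {V : Type*} (W : List (Sym2 V × ℕ)) : Prop :=
  List.Chain' (fun a b => ∃ v : V, v ∈ a.1 ∧ v ∈ b.1) W

/-- Applying a hyperwalk `W = ((e₁,s₁),...,(e_k,s_k))` to a profile
`P = (M₀, ..., M_α)`: each `Mᵢ` gains the odd-indexed edges `e_j` with `s_j = i` and
loses the even-indexed edges `e_j` with `s_j = i` (positions are 1-based, so 0-based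
position `j` is odd-indexed iff `j % 2 = 0`). -/
def applyHW {V : Type*} [DecidableEq V]
    (P : ℕ → Finset (Sym2 V)) (W : List (Sym2 V × ℕ)) : ℕ → Finset (Sym2 V) :=
  fun i =>
    (P i ∪ (((W.zipIdx.map Prod.swap).filter (fun p => p.1 % 2 = 0 ∧ p.2.2 = i)).map
        (fun p => p.2.1)).toFinset)
      \ (((W.zipIdx.map Prod.swap).filter (fun p => p.1 % 2 = 1 ∧ p.2.2 = i)).map
        (fun p => p.2.1)).toFinset

section Aux
variable {V : Type*} [DecidableEq V]

def hwSet (W : List (Sym2 V × ℕ)) (b i : ℕ) : Finset (Sym2 V) :=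
  (((W.zipIdx.map Prod.swap).filter (fun p => p.1 % 2 = b ∧ p.2.2 = i)).map (fun p => p.2.1)).toFinset

lemma applyHW_eq (P : ℕ → Finset (Sym2 V)) (W : List (Sym2 V × ℕ)) (i : ℕ) :
    applyHW P W i = (P i ∪ hwSet W 0 i) \ hwSet W 1 i := rfl

lemma edge_of_mem_hwSet {W : List (Sym2 V × ℕ)} {b i : ℕ} {e : Sym2 V} (h : e ∈ hwSet W b i) :
    ∃ p ∈ W, (p : Sym2 V × ℕ).1 = e := by
  simp only [hwSet, List.mem_toFinset, List.mem_map, List.mem_filter] at h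
  obtain ⟨p, ⟨⟨q, hq, rfl⟩, _⟩, he⟩ := h
  exact ⟨q.1, List.fst_mem_of_mem_zipIdx hq, he⟩

lemma contains_of_mem_hwSet {W : List (Sym2 V × ℕ)} {b i : ℕ} {e : Sym2 V}
    (h : e ∈ hwSet W b i) {v : V} (hv : v ∈ e) : HWContains W v := by
  obtain ⟨p, hp, he⟩ := edge_of_mem_hwSet h
  exact ⟨p, hp, he ▸ hv⟩

lemma applyHW_comm (P : ℕ → Finset (Sym2 V)) {W W' : List (Sym2 V × ℕ)}
    (h : ∀ v : V, ¬ (HWContains W v ∧ HWContains W' v)) :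
    applyHW (applyHW P W) W' = applyHW (applyHW P W') W := by
  funext i
  simp only [applyHW_eq]
  have key : ∀ (b b' : ℕ) (e : Sym2 V), e ∈ hwSet W b i → e ∉ hwSet W' b' i := by
    intro b b' e he he'
    exact h e.out.1 ⟨contains_of_mem_hwSet he (Sym2.out_fst_mem e),
      contains_of_mem_hwSet he' (Sym2.out_fst_mem e)⟩
  ext x
  have h00 := key 0 0 x; have h01 := key 0 1 x; have h10 := key 1 0 x; have h11 := key 1 1 x
  simp only [mem_sdiff, mem_union]
  tauto

lemma applyHW_idem (P : ℕ → Finset (Sym2 V)) (W : List (Sym2 V × ℕ)) :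
    applyHW (applyHW P W) W = applyHW P W := by
  funext i
  simp only [applyHW_eq]
  ext x
  simp only [mem_sdiff, mem_union]
  tauto

lemma filter_applyHW_of_not_contains (P : ℕ → Finset (Sym2 V)) {W : List (Sym2 V × ℕ)}
    {v : V} (h : ¬ HWContains W v) (i : ℕ) :
    (applyHW P W i).filter (fun e => v ∈ e) = (P i).filter (fun e => v ∈ e) := by
  ext x
  simp only [mem_filter, applyHW_eq, mem_sdiff, mem_union]
  constructor
  · rintro ⟨⟨hx | hx, _⟩, hv⟩
    · exact ⟨hx, hv⟩
    · exact absurd (contains_of_mem_hwSet hx hv) h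
  · rintro ⟨hx, hv⟩
    refine ⟨⟨Or.inl hx, fun h1 => h (contains_of_mem_hwSet h1 hv)⟩, hv⟩

lemma filter_foldl_of_not_contains {v : V} :
    ∀ (l : List (List (Sym2 V × ℕ))) (P : ℕ → Finset (Sym2 V)),
    (∀ W ∈ l, ¬ HWContains W v) → ∀ i,
    (l.foldl applyHW P i).filter (fun e => v ∈ e) = (P i).filter (fun e => v ∈ e) := by
  intro l
  induction l with
  | nil => intro P _ i; rfl
  | cons W l ih =>
    intro P h i
    rw [List.foldl_cons, ih (applyHW P W) (fun X hX => h X (List.mem_cons_of_mem _ hX)) i,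
      filter_applyHW_of_not_contains P (h W (List.mem_cons_self)) i]

lemma foldl_const (P : ℕ → Finset (Sym2 V)) (W : List (Sym2 V × ℕ)) :
    ∀ (l : List (List (Sym2 V × ℕ))), (∀ X ∈ l, X = W) →
    l.foldl applyHW (applyHW P W) = applyHW P W := by
  intro l
  induction l with
  | nil => intro _; rfl
  | cons X l ih =>
    intro h
    rw [List.foldl_cons, h X (List.mem_cons_self), applyHW_idem]
    exact ih (fun Y hY => h Y (List.mem_cons_of_mem _ hY))

end Aux

/-- Let `I` be an independent set of hyperwalks (no two share a
vertex), each of which is a walk and is augmenting with respect to a profile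
`P = (M₀, ..., M_α)` of matchings, in the sense that applying it to `P` yields
matchings.  Then applying all hyperwalks of `I` to `P` in any order yields the same
resulting profile `P Δ I`, and each resulting `M'ᵢ` is a matching. -/
theorem stmt_19 {V : Type*} [DecidableEq V] (α : ℕ)
    (P : ℕ → Finset (Sym2 V)) (hP : ∀ i ≤ α, EdgesAreMatching (P i))
    (I : List (List (Sym2 V × ℕ)))
    (hlabels : ∀ W ∈ I, ∀ p ∈ W, (p : Sym2 V × ℕ).2 ≤ α)
    (hwalk : ∀ W ∈ I, HWIsWalk W)
    (hdisj : ∀ W ∈ I, ∀ W' ∈ I, W ≠ W' →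
      ∀ v : V, ¬ (HWContains W v ∧ HWContains W' v))
    (haug : ∀ W ∈ I, ∀ i ≤ α, EdgesAreMatching (applyHW P W i)) :
    (∀ I' : List (List (Sym2 V × ℕ)), I.Perm I' →
      I.foldl applyHW P = I'.foldl applyHW P) ∧
    (∀ i ≤ α, EdgesAreMatching (I.foldl applyHW P i)) := by
  have hcomm : ∀ x ∈ I, ∀ y ∈ I, ∀ (z : ℕ → Finset (Sym2 V)),
      applyHW (applyHW z x) y = applyHW (applyHW z y) x := by
    intro x hx y hy z
    by_cases hxy : x = y
    · subst hxy; rfl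
    · exact applyHW_comm z (hdisj x hx y hy hxy)
  have part1 : ∀ I' : List (List (Sym2 V × ℕ)), I.Perm I' →
      I.foldl applyHW P = I'.foldl applyHW P :=
    fun I' hp => hp.foldl_eq' hcomm P
  refine ⟨part1, ?_⟩
  intro i hi v
  by_cases hv : ∃ W ∈ I, HWContains W v
  · obtain ⟨W, hWI, hWv⟩ := hv
    have hsplit := (List.filter_append_perm (fun X => X = W) I).symm
    rw [part1 _ hsplit, List.foldl_append]
    have hW1 : I.filter (fun X => X = W) = W :: (I.filter (fun X => X = W)).tail := by
      have hmem : W ∈ I.filter (fun X => X = W) := by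
        simp [List.mem_filter, hWI]
      cases h : I.filter (fun X => X = W) with
      | nil => rw [h] at hmem; exact absurd hmem List.not_mem_nil
      | cons X l =>
        have hX : X = W := by
          have : X ∈ I.filter (fun X => X = W) := h ▸ List.mem_cons_self
          simpa using (List.mem_filter.mp this).2
        simp [h, hX]
    have hall : ∀ X ∈ (I.filter (fun X => X = W)).tail, X = W := by
      intro X hX
      have : X ∈ I.filter (fun X => X = W) := List.mem_of_mem_tail hX
      simpa using (List.mem_filter.mp this).2
    have hfold1 : (I.filter (fun X => X = W)).foldl applyHW P = applyHW P W := by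
      rw [hW1, List.foldl_cons]
      exact foldl_const P W _ hall
    rw [hfold1]
    have hnone : ∀ X ∈ I.filter (fun X => !(X = W : Bool)), ¬ HWContains X v := by
      intro X hX hXv
      have hXI := List.mem_filter.mp hX
      have hXW : X ≠ W := by simpa using hXI.2
      exact hdisj X hXI.1 W hWI hXW v ⟨hXv, hWv⟩
    rw [filter_foldl_of_not_contains _ _ hnone i]
    exact haug W hWI i hi v
  · push_neg at hv
    rw [filter_foldl_of_not_contains I P hv i]
    exact hP i hi v
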